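/- Let W : A → B be a strict 2-functor between strict bicategories which is locally fully faithful, i.e., for all objects x, y of A the induced functor from the hom-category (x ⟶ y) to the hom-category (W.obj x ⟶ W.obj y), given on objects by W.map and on morphisms by W.map₂, is fully faithful. Let f : b ⟶ a, g : c ⟶ a, and r : c ⟶ b be 1-cells of A and ρ : r ≫ f ⟶ g a 2-cell of A. If (W.map r, W.map₂ ρ) is an absolute right lifting of W.map g through W.map f in B (where W.map₂ ρ is regarded as a 2-cell W.map r ≫ W.map f ⟶ W.map g via the strictness equality W.map (r ≫ f) = W.map r ≫ W.map f), then (r, ρ) is an absolute right lifting of g through f in A. That is, locally fully faithful strict 2-functors reflect absolute right lifting diagrams. -/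

import Mathlib

open CategoryTheory Bicategory

universe w₁ w₂ w₃ v₁ v₂ v₃ u₁ u₂ u₃

/-- A strict 2-functor between strict bicategories is a pseudofunctor which preserves
identity 1-cells and composition of 1-cells strictly, and whose coherence isomorphisms
are the `eqToIso`s of these equalities. -/
structure StrictTwoFunctor (B : Type u₁) (A : Type u₂) [Bicategory.{w₁, v₁} B]
    [Bicategory.{w₂, v₂} A] [Bicategory.Strict B] [Bicategory.Strict A] extends
    CategoryTheory.Pseudofunctor B A where
  map_id' : ∀ x : B, toPseudofunctor.map (𝟙 x) = 𝟙 (toPseudofunctor.obj x)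
  map_comp' : ∀ {x y z : B} (f : x ⟶ y) (g : y ⟶ z),
    toPseudofunctor.map (f ≫ g) = toPseudofunctor.map f ≫ toPseudofunctor.map g
  mapId_eq : ∀ x : B, toPseudofunctor.mapId x = eqToIso (map_id' x)
  mapComp_eq : ∀ {x y z : B} (f : x ⟶ y) (g : y ⟶ z),
    toPseudofunctor.mapComp f g = eqToIso (map_comp' f g)

namespace StrictTwoFunctor

variable {B : Type u₁} {A : Type u₂} {C : Type u₃} [Bicategory.{w₁, v₁} B]
  [Bicategory.{w₂, v₂} A] [Bicategory.{w₃, v₃} C]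
  [Bicategory.Strict B] [Bicategory.Strict A] [Bicategory.Strict C]

theorem map₂_eqToHom (F : StrictTwoFunctor B A) {x y : B} {f g : x ⟶ y} (h : f = g) :
    F.map₂ (eqToHom h) = eqToHom (congrArg F.map h) := by
  subst h; simp

/-- The identity strict 2-functor. -/
def id (B : Type u₁) [Bicategory.{w₁, v₁} B] [Bicategory.Strict B] :
    StrictTwoFunctor B B where
  toPseudofunctor := Pseudofunctor.id B
  map_id' _ := rfl
  map_comp' _ _ := rfl
  mapId_eq _ := by aesop_cat
  mapComp_eq _ _ := by aesop_cat

/-- Composition of strict 2-functors. -/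
def comp (F : StrictTwoFunctor B A) (G : StrictTwoFunctor A C) : StrictTwoFunctor B C where
  toPseudofunctor := F.toPseudofunctor.comp G.toPseudofunctor
  map_id' x := by
    exact (congrArg G.map (F.map_id' x)).trans (G.map_id' _)
  map_comp' f g := by
    exact (congrArg G.map (F.map_comp' f g)).trans (G.map_comp' _ _)
  mapId_eq x := by
    ext
    simp [Pseudofunctor.comp, F.mapId_eq, G.mapId_eq, PrelaxFunctor.map₂Iso_eqToIso]
    erw [eqToIso_trans]
  mapComp_eq f g := by
    ext
    simp [Pseudofunctor.comp, F.mapComp_eq, G.mapComp_eq, PrelaxFunctor.map₂Iso_eqToIso]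
    erw [eqToIso_trans]

end StrictTwoFunctor

/-- A 2-natural transformation between strict 2-functors. -/
structure TwoNatTrans {B : Type u₁} {A : Type u₂} [Bicategory.{w₁, v₁} B]
    [Bicategory.{w₂, v₂} A] [Bicategory.Strict B] [Bicategory.Strict A]
    (F G : StrictTwoFunctor B A) where
  app : ∀ x : B, F.obj x ⟶ G.obj x
  naturality : ∀ {x y : B} (f : x ⟶ y), F.map f ≫ app y = app x ≫ G.map f
  naturality₂ : ∀ {x y : B} {f g : x ⟶ y} (θ : f ⟶ g),
    (F.map₂ θ ▷ app y) ≫ eqToHom (naturality g) = eqToHom (naturality f) ≫ (app x ◁ G.map₂ θ)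

/-- In a strict bicategory `K`, the pair `(r, ρ)` is an absolute right lifting of `g` through
`f` if every 2-cell `χ : b' ≫ f ⟶ c' ≫ g` factors uniquely through `ρ`. -/
def IsAbsoluteRightLifting {K : Type u₁} [Bicategory.{w₁, v₁} K] [Bicategory.Strict K]
    {a b c : K} (f : b ⟶ a) (g : c ⟶ a) (r : c ⟶ b) (ρ : r ≫ f ⟶ g) : Prop :=
  ∀ (x : K) (b' : x ⟶ b) (c' : x ⟶ c) (χ : b' ≫ f ⟶ c' ≫ g),
    ∃! ζ : b' ⟶ c' ≫ r,
      χ = (ζ ▷ f) ≫ eqToHom (Bicategory.Strict.assoc c' r f) ≫ (c' ◁ ρ)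

variable {A : Type u₁} {B : Type u₂} [Bicategory.{w₁, v₁} A] [Bicategory.{w₂, v₂} B]
  [Bicategory.Strict A] [Bicategory.Strict B]

/-- Locally fully faithful strict 2-functors reflect absolute right lifting diagrams:
if each functor between hom-categories induced by `W` is fully faithful and
`(W.map r, W.map₂ ρ)` is an absolute right lifting of `W.map g` through `W.map f` in `B`,
then `(r, ρ)` is an absolute right lifting of `g` through `f` in `A`. -/
theorem locallyFullyFaithful_reflects_absoluteRightLifting (W : StrictTwoFunctor A B)
    (hfull : ∀ x y : A, (W.mapFunctor x y).Full)
    (hfaithful : ∀ x y : A, (W.mapFunctor x y).Faithful)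
    {a b c : A} (f : b ⟶ a) (g : c ⟶ a) (r : c ⟶ b) (ρ : r ≫ f ⟶ g)
    (h : IsAbsoluteRightLifting (W.map f) (W.map g) (W.map r)
      (eqToHom (W.map_comp' r f).symm ≫ W.map₂ ρ)) :
    IsAbsoluteRightLifting f g r ρ := by

  intro x b' c' χ
  obtain ⟨ζ', hζ', huniq⟩ := h (W.obj x) (W.map b') (W.map c')
    (eqToHom (W.map_comp' b' f).symm ≫ W.map₂ χ ≫ eqToHom (W.map_comp' c' g))
  have hfu := hfull x b
  refine ⟨(W.mapFunctor x b).preimage (ζ' ≫ eqToHom (W.map_comp' c' r).symm), ?_, ?_⟩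
  · apply (hfaithful x a).map_injective
    have hpre : W.map₂ ((W.mapFunctor x b).preimage (ζ' ≫ eqToHom (W.map_comp' c' r).symm))
        = ζ' ≫ eqToHom (W.map_comp' c' r).symm := (W.mapFunctor x b).map_preimage _
    simp only [PrelaxFunctor.mapFunctor_map, PrelaxFunctor.map₂_comp,
      Pseudofunctor.map₂_whisker_right, Pseudofunctor.map₂_whisker_left, W.mapComp_eq,
      W.map₂_eqToHom, eqToIso.hom, eqToIso.inv, hpre]
    dsimp only [PrelaxFunctor.mapFunctor]
    rw [← cancel_epi (eqToHom (W.map_comp' b' f).symm), ← cancel_mono (eqToHom (W.map_comp' c' g))]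
    simp [hζ']
  · intro ζ hζ
    apply (hfaithful x b).map_injective
    have : W.map₂ ζ ≫ eqToHom (W.map_comp' c' r) = ζ' := by
      apply huniq
      rw [hζ]
      simp only [PrelaxFunctor.map₂_comp, Pseudofunctor.map₂_whisker_right,
        Pseudofunctor.map₂_whisker_left, W.mapComp_eq, W.map₂_eqToHom, eqToIso.hom, eqToIso.inv]
      simp
    have hp := (W.mapFunctor x b).map_preimage (ζ' ≫ eqToHom (W.map_comp' c' r).symm)
    simp only [PrelaxFunctor.mapFunctor_map] at hp ⊢
    dsimp only [PrelaxFunctor.mapFunctor] at hp ⊢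
    rw [hp, ← this]
    simp
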